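/- For symmetric positive definite A₁, A₂, the maximum of tr(P·A₁^{1/2}·A₂^{1/2}) over orthogonal matrices P equals tr((A₁A₂)^{1/2}), i.e., tr of the square root with positive eigenvalues of A₁A₂. Consequently, the minimum of ‖P₁A₁^{1/2} − P₂A₂^{1/2}‖_F over orthogonal P₁, P₂ equals (tr(A₁) + tr(A₂) − 2tr((A₁A₂)^{1/2}))^{1/2}. -/

import Mathlib

open Matrix

/-- Bures–Wasserstein distance: `max { tr(P·A₁^{1/2}·A₂^{1/2}) : P orthogonal }
= tr((A₁A₂)^{1/2})`, and consequently
`min { ‖P₁A₁^{1/2} − P₂A₂^{1/2}‖_F : P₁, P₂ orthogonal }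
= (tr A₁ + tr A₂ − 2 tr((A₁A₂)^{1/2}))^{1/2}`.
Here `S1, S2` are the positive definite square roots of `A₁, A₂`, `N` that of
`S1·A₂·S1`, so `(A₁A₂)^{1/2} = S1·N·S1⁻¹` and `tr((A₁A₂)^{1/2}) = tr N`. -/
lemma tr_mul_transpose_self {n : ℕ} (A : Matrix (Fin n) (Fin n) ℝ) :
    (A * Aᵀ).trace = ∑ i, ∑ j, A i j ^ 2 := by
  simp [Matrix.trace, Matrix.mul_apply, Matrix.diag, sq]

lemma cs_trace {n : ℕ} (A B : Matrix (Fin n) (Fin n) ℝ) :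
    (A * Bᵀ).trace ^ 2 ≤ (A * Aᵀ).trace * (B * Bᵀ).trace := by
  have h := Finset.sum_mul_sq_le_sq_mul_sq (Finset.univ ×ˢ Finset.univ)
    (fun p : Fin n × Fin n => A p.1 p.2) (fun p : Fin n × Fin n => B p.1 p.2)
  simpa [Fintype.sum_prod_type, Matrix.trace, Matrix.mul_apply, Matrix.diag, sq] using h

lemma trace_orth_mul_le {n : ℕ} (Q M : Matrix (Fin n) (Fin n) ℝ)
    (hQ : Qᵀ * Q = 1) (hM : M.PosDef) : (Q * M).trace ≤ M.trace := by
  open scoped MatrixOrder in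
  set R := CFC.sqrt M with hRdef
  open scoped MatrixOrder in
  have hRs : R * R = M := CFC.sqrt_mul_sqrt_self M hM.posSemidef.nonneg
  have hRt : Rᵀ = R := by
    rw [← Matrix.conjTranspose_eq_transpose_of_trivial]
    open scoped MatrixOrder in
    exact (CFC.sqrt_nonneg M).posSemidef.isHermitian
  have h1 : (Q * M).trace = (R * (Q * R)).trace := by
    rw [← hRs, ← Matrix.mul_assoc, Matrix.trace_mul_comm]
  have h2 : (R * Rᵀ).trace = M.trace := by rw [hRt, hRs]
  have h3 : ((Q * R)ᵀ * ((Q * R)ᵀ)ᵀ).trace = M.trace := by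
    rw [Matrix.transpose_transpose, Matrix.transpose_mul, hRt, Matrix.mul_assoc,
      ← Matrix.mul_assoc Qᵀ, hQ, one_mul, hRs]
  have h4 := cs_trace R ((Q * R)ᵀ)
  simp only [Matrix.transpose_transpose] at h3 h4
  rw [h2, h3] at h4
  have h5 : 0 ≤ M.trace := by
    rw [← h2, tr_mul_transpose_self]
    positivity
  nlinarith [h4, h5, h1]

theorem bures_wasserstein_trace {n : ℕ} (A₁ A₂ S1 S2 N : Matrix (Fin n) (Fin n) ℝ)
    (hA₁ : A₁.PosDef) (hA₂ : A₂.PosDef)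
    (hS1 : S1.PosDef) (hS1sq : S1 * S1 = A₁)
    (hS2 : S2.PosDef) (hS2sq : S2 * S2 = A₂)
    (hN : N.PosDef) (hNsq : N * N = S1 * A₂ * S1) :
    IsGreatest {c : ℝ | ∃ P : Matrix (Fin n) (Fin n) ℝ,
        Pᵀ * P = 1 ∧ c = (P * S1 * S2).trace} (S1 * N * S1⁻¹).trace ∧
    IsLeast {d : ℝ | ∃ P₁ P₂ : Matrix (Fin n) (Fin n) ℝ,
        P₁ᵀ * P₁ = 1 ∧ P₂ᵀ * P₂ = 1 ∧
        d = Real.sqrt (((P₁ * S1 - P₂ * S2)ᵀ * (P₁ * S1 - P₂ * S2)).trace)}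
      (Real.sqrt (A₁.trace + A₂.trace - 2 * (S1 * N * S1⁻¹).trace)) := by
  -- symmetry facts
  have hS1t : S1ᵀ = S1 := by
    rw [← Matrix.conjTranspose_eq_transpose_of_trivial]; exact hS1.isHermitian
  have hS2t : S2ᵀ = S2 := by
    rw [← Matrix.conjTranspose_eq_transpose_of_trivial]; exact hS2.isHermitian
  have hNt : Nᵀ = N := by
    rw [← Matrix.conjTranspose_eq_transpose_of_trivial]; exact hN.isHermitian
  have hS1det : IsUnit S1.det := (Matrix.isUnit_iff_isUnit_det _).mp hS1.isUnit
  have hNdet : IsUnit N.det := (Matrix.isUnit_iff_isUnit_det _).mp hN.isUnit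
  -- trace of the conjugated square root
  have htc : (S1 * N * S1⁻¹).trace = N.trace := by
    rw [Matrix.trace_mul_cycle, Matrix.nonsing_inv_mul _ hS1det, one_mul]
  -- polar decomposition of S1 * S2
  have hMMt : (S1 * S2) * (S1 * S2)ᵀ = N * N := by
    rw [Matrix.transpose_mul, hS1t, hS2t, hNsq, ← hS2sq]
    simp only [Matrix.mul_assoc]
  set U : Matrix (Fin n) (Fin n) ℝ := N⁻¹ * (S1 * S2) with hUdef
  have hUUt : U * Uᵀ = 1 := by
    have hNinvT : (N⁻¹)ᵀ = N⁻¹ := by rw [Matrix.transpose_nonsing_inv, hNt]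
    rw [hUdef, Matrix.transpose_mul, hNinvT, Matrix.mul_assoc,
      ← Matrix.mul_assoc (S1 * S2), hMMt, ← Matrix.mul_assoc, ← Matrix.mul_assoc,
      Matrix.nonsing_inv_mul _ hNdet, one_mul, Matrix.mul_nonsing_inv _ hNdet]
  have hUtU : Uᵀ * U = 1 := mul_eq_one_comm.mp hUUt
  have hNU : N * U = S1 * S2 := by
    rw [hUdef, ← Matrix.mul_assoc, Matrix.mul_nonsing_inv _ hNdet, one_mul]
  -- upper bound for the first part
  have hub : ∀ P : Matrix (Fin n) (Fin n) ℝ, Pᵀ * P = 1 →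
      (P * S1 * S2).trace ≤ N.trace := by
    intro P hP
    have hQ : (U * P)ᵀ * (U * P) = 1 := by
      rw [Matrix.transpose_mul, Matrix.mul_assoc, ← Matrix.mul_assoc Uᵀ, hUtU, one_mul, hP]
    have : (P * S1 * S2).trace = ((U * P) * N).trace := by
      rw [Matrix.mul_assoc, ← hNU, ← Matrix.mul_assoc, Matrix.trace_mul_comm,
        ← Matrix.mul_assoc]
    rw [this]
    exact trace_orth_mul_le _ _ hQ hN
  -- the maximum is attained at P = Uᵀ
  have hUt_orth : (Uᵀ)ᵀ * Uᵀ = 1 := by rw [Matrix.transpose_transpose, hUUt]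
  have hattain : (Uᵀ * S1 * S2).trace = N.trace := by
    rw [Matrix.mul_assoc, ← hNU, Matrix.trace_mul_comm, Matrix.mul_assoc, hUUt, Matrix.mul_one]
  -- expansion identity for the second part
  have hexp : ∀ P₁ P₂ : Matrix (Fin n) (Fin n) ℝ, P₁ᵀ * P₁ = 1 → P₂ᵀ * P₂ = 1 →
      (((P₁ * S1 - P₂ * S2)ᵀ * (P₁ * S1 - P₂ * S2)).trace)
        = A₁.trace + A₂.trace - 2 * ((P₂ᵀ * P₁) * S1 * S2).trace := by
    intro P₁ P₂ hP₁ hP₂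
    have e1 : (P₁ * S1 - P₂ * S2)ᵀ * (P₁ * S1 - P₂ * S2)
        = S1 * (P₁ᵀ * P₁) * S1 - S1 * (P₁ᵀ * P₂) * S2
          - (S2 * (P₂ᵀ * P₁) * S1 - S2 * (P₂ᵀ * P₂) * S2) := by
      simp only [Matrix.transpose_sub, Matrix.transpose_mul, hS1t, hS2t,
        Matrix.sub_mul, Matrix.mul_sub, Matrix.mul_assoc]
      abel
    rw [e1, hP₁, hP₂]
    simp only [Matrix.mul_one, Matrix.trace_sub, mul_one]
    rw [hS1sq, hS2sq]
    have e2 : (S1 * (P₁ᵀ * P₂) * S2).trace = ((P₂ᵀ * P₁) * S1 * S2).trace := by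
      rw [← Matrix.trace_transpose (S1 * (P₁ᵀ * P₂) * S2)]
      simp only [Matrix.transpose_mul, hS1t, hS2t, Matrix.transpose_transpose]
      rw [Matrix.trace_mul_cycle]
      simp only [Matrix.mul_assoc]
    have e3 : (S2 * (P₂ᵀ * P₁) * S1).trace = ((P₂ᵀ * P₁) * S1 * S2).trace := by
      rw [Matrix.trace_mul_cycle]
      rw [Matrix.trace_mul_cycle]
    rw [e2, e3]; ring
  refine ⟨⟨⟨Uᵀ, hUt_orth, by rw [htc, hattain]⟩, ?_⟩, ⟨⟨Uᵀ, 1, hUt_orth, by simp, ?_⟩, ?_⟩⟩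
  · rintro c ⟨P, hP, rfl⟩
    rw [htc]; exact hub P hP
  · rw [hexp Uᵀ 1 hUt_orth (by simp), htc]
    simp only [Matrix.transpose_one, Matrix.one_mul]
    rw [hattain]
  · rintro d ⟨P₁, P₂, hP₁, hP₂, rfl⟩
    rw [hexp P₁ P₂ hP₁ hP₂]
    apply Real.sqrt_le_sqrt
    have hQorth : (P₂ᵀ * P₁)ᵀ * (P₂ᵀ * P₁) = 1 := by
      have hP₂' : P₂ * P₂ᵀ = 1 := mul_eq_one_comm.mp hP₂
      rw [Matrix.transpose_mul, Matrix.transpose_transpose, Matrix.mul_assoc,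
        ← Matrix.mul_assoc P₂, hP₂', one_mul, hP₁]
    have := hub (P₂ᵀ * P₁) hQorth
    rw [htc]
    linarith
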